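/- Let R be a ceer with infinitely many equivalence classes such that for some n ∈ ℕ every equivalence class of R has at most n elements (R is bounded). Then there is a computable function f : ℕ → ℕ with x = y ↔ f(x) R f(y) for all x, y; equivalently, R has an infinite computably enumerable partial transversal, and the degree 0 belongs to Spec⇒(Id, R). -/

import Mathlib

/-- `RecursiveIn' O f` means the partial function `f` is partial recursive in the
(total) oracle `O`. -/
inductive RecursiveIn' (O : ℕ → ℕ) : (ℕ →. ℕ) → Prop
  | zero : RecursiveIn' O (pure 0)
  | succ : RecursiveIn' O Nat.succ
  | left : RecursiveIn' O ↑fun n : ℕ => n.unpair.1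
  | right : RecursiveIn' O ↑fun n : ℕ => n.unpair.2
  | oracle : RecursiveIn' O ↑O
  | pair {f g} : RecursiveIn' O f → RecursiveIn' O g →
      RecursiveIn' O fun n => Nat.pair <$> f n <*> g n
  | comp {f g} : RecursiveIn' O f → RecursiveIn' O g →
      RecursiveIn' O fun n => g n >>= f
  | prec {f g} : RecursiveIn' O f → RecursiveIn' O g →
      RecursiveIn' O (Nat.unpaired fun a n =>
        n.rec (f a) fun y IH => do let i ← IH; g (Nat.pair a (Nat.pair y i)))
  | rfind {f} : RecursiveIn' O f →
      RecursiveIn' O fun a => Nat.rfind fun n => (fun m => m = 0) <$> f (Nat.pair a n)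

/-- Turing reducibility between total functions on `ℕ`. -/
def TuringReducible' (f g : ℕ → ℕ) : Prop := RecursiveIn' g ↑f

/-- Turing equivalence of total functions on `ℕ`. -/
def TuringEquivalent' (f g : ℕ → ℕ) : Prop := TuringReducible' f g ∧ TuringReducible' g f

theorem TuringReducible'.refl (f : ℕ → ℕ) : TuringReducible' f f := RecursiveIn'.oracle

theorem RecursiveIn'.trans' {f : ℕ →. ℕ} {g h : ℕ → ℕ}
    (hf : RecursiveIn' g f) (hg : TuringReducible' g h) : RecursiveIn' h f := by
  induction hf with
  | zero => exact .zero
  | succ => exact .succ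
  | left => exact .left
  | right => exact .right
  | oracle => exact hg
  | pair _ _ ih₁ ih₂ => exact .pair ih₁ ih₂
  | comp _ _ ih₁ ih₂ => exact .comp ih₁ ih₂
  | prec _ _ ih₁ ih₂ => exact .prec ih₁ ih₂
  | rfind _ ih => exact .rfind ih

theorem TuringReducible'.trans {f g h : ℕ → ℕ}
    (h₁ : TuringReducible' f g) (h₂ : TuringReducible' g h) : TuringReducible' f h :=
  RecursiveIn'.trans' h₁ h₂

/-- The setoid of Turing equivalence. -/
def turingSetoid : Setoid (ℕ → ℕ) :=
  ⟨TuringEquivalent',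
    fun f => ⟨.refl f, .refl f⟩,
    fun ⟨h₁, h₂⟩ => ⟨h₂, h₁⟩,
    fun ⟨a₁, a₂⟩ ⟨b₁, b₂⟩ => ⟨a₁.trans b₁, b₂.trans a₂⟩⟩

/-- Turing degrees. -/
def TuringDegree' : Type := Quotient turingSetoid

/-- The Turing degree of a total function. -/
def TuringDegree'.deg (f : ℕ → ℕ) : TuringDegree' := Quotient.mk turingSetoid f

instance : LE TuringDegree' :=
  ⟨fun d₁ d₂ =>
    Quotient.liftOn₂ d₁ d₂ TuringReducible'
      (fun _ _ _ _ h h' =>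
        propext ⟨fun hr => (h.2.trans hr).trans h'.1, fun hr => (h.1.trans hr).trans h'.2⟩)⟩

instance : LT TuringDegree' := ⟨fun d₁ d₂ => d₁ ≤ d₂ ∧ ¬d₂ ≤ d₁⟩

/-- The least Turing degree. -/
def TuringDegree'.zero : TuringDegree' := TuringDegree'.deg fun _ => 0

/-- A partial function is computable in a Turing degree if it is recursive in some
(equivalently, any) representative of that degree. -/
def TuringDegree'.ComputableIn (d : TuringDegree') (f : ℕ →. ℕ) : Prop :=
  Quotient.liftOn d (fun g => RecursiveIn' g f)
    (fun _ _ h => propext ⟨fun hr => hr.trans' h.1, fun hr => hr.trans' h.2⟩)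

open Classical in
/-- The characteristic function of a set of naturals. -/
noncomputable def charFun (A : Set ℕ) : ℕ → ℕ := fun n => if n ∈ A then 1 else 0

/-- Turing reducibility between sets of naturals. -/
noncomputable def SetTuringReducible (A B : Set ℕ) : Prop :=
  TuringReducible' (charFun A) (charFun B)

/-- The Turing degree of a set of naturals. -/
noncomputable def TuringDegree'.degSet (A : Set ℕ) : TuringDegree' :=
  TuringDegree'.deg (charFun A)

/-- `R` is `d`-computably reducible to `S`. -/
def ReducibleIn (d : TuringDegree') (R S : ℕ → ℕ → Prop) : Prop :=
  ∃ f : ℕ → ℕ, d.ComputableIn ↑f ∧ ∀ x y, R x y ↔ S (f x) (f y)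

/-- The reducibility spectrum of the pair `(R, S)`. -/
def SpecRed (R S : ℕ → ℕ → Prop) : Set TuringDegree' := {d | ReducibleIn d R S}

/-- The bi-reducibility spectrum of the pair `(R, S)`. -/
def SpecBired (R S : ℕ → ℕ → Prop) : Set TuringDegree' :=
  {d | ReducibleIn d R S ∧ ReducibleIn d S R}

/-- The equivalence relation generated by a set `A`: two numbers are equivalent
iff they are equal or both belong to `A`. -/
def genRel (A : Set ℕ) : ℕ → ℕ → Prop := fun x y => x = y ∨ (x ∈ A ∧ y ∈ A)

/-- A ceer: an equivalence relation whose set of pairs is computably enumerable. -/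
def Ceer (R : ℕ → ℕ → Prop) : Prop :=
  Equivalence R ∧ REPred fun p : ℕ × ℕ => R p.1 p.2

/-- A computably enumerable set of naturals. -/
def CePred (A : Set ℕ) : Prop := REPred (· ∈ A)

/-- A partial transversal of `R`: a set any two distinct elements of which are
`R`-inequivalent. -/
def PartialTransversal (R : ℕ → ℕ → Prop) (A : Set ℕ) : Prop :=
  ∀ x ∈ A, ∀ y ∈ A, x ≠ y → ¬R x y

/-- An introreducible set: an infinite set computable from each of its infinite subsets. -/
def Introreducible (B : Set ℕ) : Prop :=
  B.Infinite ∧ ∀ C : Set ℕ, C ⊆ B → C.Infinite → SetTuringReducible B C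


namespace Stmt15Aux

theorem chain'_mono_mem {P Q : ℕ → ℕ → Prop} :
    ∀ {l : List ℕ}, l.Chain' P → (∀ a ∈ l, ∀ b ∈ l, P a b → Q a b) → l.Chain' Q := by
  intro l
  induction l with
  | nil => intro _ _; exact List.isChain_nil
  | cons a l ih =>
    intro h h2
    rw [List.Chain', List.isChain_cons] at h ⊢
    refine ⟨fun b hb => h2 a (by simp) b ?_ (h.1 b hb), ih h.2 ?_⟩
    · exact List.mem_cons_of_mem a (List.mem_of_mem_head? hb)
    · intro x hx y hy hxy
      exact h2 x (List.mem_cons_of_mem a hx) y (List.mem_cons_of_mem a hy) hxy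

/-- fold computing (head?, chain'-check). -/
def chkFold (V : ℕ → ℕ → Bool) (l : List ℕ) : Option ℕ × Bool :=
  l.foldr (fun a st => (some a, st.2 && (st.1.casesOn true fun b => V a b))) (none, true)

theorem chkFold_spec (V : ℕ → ℕ → Bool) :
    ∀ l : List ℕ, (chkFold V l).1 = l.head? ∧
      ((chkFold V l).2 = true ↔ l.Chain' fun a b => V a b = true)
  | [] => by simp [chkFold, List.Chain']
  | a :: l => by
    obtain ⟨h1, h2⟩ := chkFold_spec V l
    have hc : chkFold V (a :: l) =
        (some a, (chkFold V l).2 && ((chkFold V l).1.casesOn true fun b => V a b)) := rfl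
    rw [hc]
    refine ⟨rfl, ?_⟩
    rw [List.Chain', List.isChain_cons]
    simp only [Bool.and_eq_true, h2, h1, List.Chain']
    cases hl : l.head? <;> simp [and_comm]

theorem allFold_spec (p : ℕ → Bool) :
    ∀ l : List ℕ, (l.foldr (fun a b => p a && b) true = true) ↔ ∀ x ∈ l, p x = true := by
  intro l; induction l with
  | nil => simp
  | cons a l ih => simp [ih]

theorem uniform_stage {V : ℕ → ℕ × ℕ → Bool}
    (mono : ∀ {t t' p}, t ≤ t' → V t p = true → V t' p = true)
    (s : Finset (ℕ × ℕ)) (h : ∀ p ∈ s, ∃ t, V t p = true) :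
    ∃ t, ∀ p ∈ s, V t p = true := by
  classical
  choose! tf htf using h
  exact ⟨s.sup tf, fun p hp => mono (Finset.le_sup hp) (htf p hp)⟩

theorem primrec_memList : PrimrecRel fun (x : ℕ) (l : List ℕ) => x ∈ l := by
  have h : PrimrecRel fun (x : ℕ) (l : List ℕ) => l.idxOf x < l.length :=
    Primrec.nat_lt.comp (Primrec.list_idxOf.comp Primrec.fst Primrec.snd)
      (Primrec.list_length.comp Primrec.snd)
  exact h.of_eq fun x l => by rw [List.idxOf_lt_length_iff]

theorem headD_eq (l : List ℕ) : l.headD 0 = l.head?.getD 0 := by cases l <;> rfl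

theorem headD_mem {l : List ℕ} (h : l ≠ []) : l.headD 0 ∈ l := by
  cases l with
  | nil => exact absurd rfl h
  | cons a l => exact List.mem_cons_self

open Nat.Partrec (Code)

/-- Stage-`t` verification of the pair `(x, y)` by the code `c`. -/
def Vfun (c : Code) (t x y : ℕ) : Bool := (Nat.Partrec.Code.evaln t c (Nat.pair x y)).isSome

theorem Vfun_mono (c : Code) {t t' x y : ℕ} (h : t ≤ t') (hv : Vfun c t x y = true) :
    Vfun c t' x y = true := by
  obtain ⟨a, ha⟩ := Option.isSome_iff_exists.1 hv
  exact Option.isSome_iff_exists.2 ⟨a, Nat.Partrec.Code.evaln_mono h ha⟩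

def VVfun (c : Code) (t a b : ℕ) : Bool := decide (a < b) && Vfun c t a b

def Qfun (c : Code) (m : ℕ) (Lf : List ℕ) (acc : List ℕ) (u : ℕ) : Bool :=
  decide ((Denumerable.ofNat (List ℕ) u.unpair.2).length = m) &&
    (chkFold (VVfun c u.unpair.1) (Denumerable.ofNat (List ℕ) u.unpair.2)).2 &&
    ((Denumerable.ofNat (List ℕ) u.unpair.2).foldr (fun a b => (!decide (a ∈ Lf)) && b) true) &&
    !decide ((Denumerable.ofNat (List ℕ) u.unpair.2).headD 0 ∈ acc)

theorem Qfun_primrec (c : Code) (m : ℕ) (Lf : List ℕ) : Primrec₂ (Qfun c m Lf) := by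
  have pl : Primrec fun p : List ℕ × ℕ => Denumerable.ofNat (List ℕ) p.2.unpair.2 :=
    (Primrec.ofNat (List ℕ)).comp (Primrec.snd.comp (Primrec.unpair.comp Primrec.snd))
  have c1 : Primrec fun p : List ℕ × ℕ =>
      decide ((Denumerable.ofNat (List ℕ) p.2.unpair.2).length = m) :=
    (Primrec.eq.comp (Primrec.list_length.comp pl) (Primrec.const m)).decide
  have pVV : Primrec fun r : ((List ℕ × ℕ) × (ℕ × (Option ℕ × Bool))) × ℕ =>
      VVfun c r.1.1.2.unpair.1 r.1.2.1 r.2 := by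
    have pa : Primrec fun r : ((List ℕ × ℕ) × (ℕ × (Option ℕ × Bool))) × ℕ => r.1.2.1 :=
      Primrec.fst.comp (Primrec.snd.comp Primrec.fst)
    have pb : Primrec fun r : ((List ℕ × ℕ) × (ℕ × (Option ℕ × Bool))) × ℕ => r.2 :=
      Primrec.snd
    have pt : Primrec fun r : ((List ℕ × ℕ) × (ℕ × (Option ℕ × Bool))) × ℕ =>
        r.1.1.2.unpair.1 :=
      Primrec.fst.comp (Primrec.unpair.comp (Primrec.snd.comp (Primrec.fst.comp Primrec.fst)))
    have hlt : Primrec fun r : ((List ℕ × ℕ) × (ℕ × (Option ℕ × Bool))) × ℕ =>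
        decide (r.1.2.1 < r.2) := (Primrec.nat_lt.comp pa pb).decide
    have hsome : Primrec fun r : ((List ℕ × ℕ) × (ℕ × (Option ℕ × Bool))) × ℕ =>
        (Nat.Partrec.Code.evaln r.1.1.2.unpair.1 c (Nat.pair r.1.2.1 r.2)).isSome :=
      Primrec.option_isSome.comp
        (Nat.Partrec.Code.primrec_evaln.comp
          ((pt.pair (Primrec.const c)).pair (Primrec₂.natPair.comp pa pb)))
    exact Primrec.and.comp hlt hsome
  have c2 : Primrec fun p : List ℕ × ℕ =>
      (chkFold (VVfun c p.2.unpair.1) (Denumerable.ofNat (List ℕ) p.2.unpair.2)).2 := by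
    have hh : Primrec₂ fun (p : List ℕ × ℕ) (bs : ℕ × (Option ℕ × Bool)) =>
        ((some bs.1 : Option ℕ),
          (bs.2.2 && (bs.2.1.casesOn true fun b => VVfun c p.2.unpair.1 bs.1 b) : Bool)) := by
      refine Primrec.pair ?_ ?_
      · exact Primrec.option_some.comp (Primrec.fst.comp Primrec.snd)
      · refine Primrec.and.comp (Primrec.snd.comp (Primrec.snd.comp Primrec.snd)) ?_
        exact Primrec.option_casesOn (Primrec.fst.comp (Primrec.snd.comp Primrec.snd))
          (Primrec.const true) pVV
    exact Primrec.snd.comp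
      ((Primrec.list_foldr pl (Primrec.const ((none : Option ℕ), true)) hh).of_eq fun p => rfl)
  have c3 : Primrec fun p : List ℕ × ℕ =>
      (Denumerable.ofNat (List ℕ) p.2.unpair.2).foldr
        (fun a b => (!decide (a ∈ Lf)) && b) true := by
    have hmemLf : Primrec fun a : ℕ => decide (a ∈ Lf) :=
      (primrec_memList.comp Primrec.id (Primrec.const Lf)).decide
    have hh : Primrec₂ fun (_ : List ℕ × ℕ) (bs : ℕ × Bool) =>
        ((!decide (bs.1 ∈ Lf)) && bs.2 : Bool) :=
      Primrec.and.comp (Primrec.not.comp (hmemLf.comp (Primrec.fst.comp Primrec.snd)))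
        (Primrec.snd.comp Primrec.snd)
    exact (Primrec.list_foldr pl (Primrec.const true) hh).of_eq fun p => rfl
  have c4 : Primrec fun p : List ℕ × ℕ =>
      !decide ((Denumerable.ofNat (List ℕ) p.2.unpair.2).headD 0 ∈ p.1) := by
    have hhd : Primrec fun p : List ℕ × ℕ =>
        (Denumerable.ofNat (List ℕ) p.2.unpair.2).headD 0 :=
      (Primrec.option_getD.comp (Primrec.list_head?.comp pl) (Primrec.const 0)).of_eq
        fun p => (headD_eq _).symm
    exact Primrec.not.comp (primrec_memList.comp hhd Primrec.fst).decide
  exact Primrec.and.comp (Primrec.and.comp (Primrec.and.comp c1 c2) c3) c4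

/-- The search for the next valid block. -/
noncomputable def stepFun (q : List ℕ → ℕ → Bool) (hex : ∀ acc, ∃ u, q acc u = true)
    (acc : List ℕ) : ℕ := Nat.find (hex acc)

theorem stepFun_spec (q : List ℕ → ℕ → Bool) (hex : ∀ acc, ∃ u, q acc u = true)
    (acc : List ℕ) : q acc (stepFun q hex acc) = true := Nat.find_spec (hex acc)

theorem stepFun_computable {q : List ℕ → ℕ → Bool} (hq : Primrec₂ q)
    (hex : ∀ acc, ∃ u, q acc u = true) : Computable (stepFun q hex) := by
  have hpr : Partrec fun acc : List ℕ => Nat.rfind fun u => (Part.some (q acc u) : Part Bool) :=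
    Partrec.rfind hq.to_comp.partrec₂
  refine hpr.of_eq_tot fun acc => ?_
  apply Nat.mem_rfind.2
  refine ⟨?_, @fun mm hmm => ?_⟩
  · rw [Part.mem_some_iff]
    exact (Nat.find_spec (hex acc)).symm
  · rw [Part.mem_some_iff]
    cases h : q acc mm with
    | false => rfl
    | true => exact absurd h (Nat.find_min (hex acc) hmm)

/-- The accumulated list of blocks found so far. -/
noncomputable def AFun (q : List ℕ → ℕ → Bool) (hex : ∀ acc, ∃ u, q acc u = true) : ℕ → List ℕ :=
  fun k => Nat.rec []
    (fun _ acc => acc ++ Denumerable.ofNat (List ℕ) ((stepFun q hex acc).unpair.2)) k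

theorem AFun_succ (q : List ℕ → ℕ → Bool) (hex : ∀ acc, ∃ u, q acc u = true) (k : ℕ) :
    AFun q hex (k + 1) =
      AFun q hex k ++ Denumerable.ofNat (List ℕ) ((stepFun q hex (AFun q hex k)).unpair.2) := rfl

theorem AFun_computable {q : List ℕ → ℕ → Bool} (hq : Primrec₂ q)
    (hex : ∀ acc, ∃ u, q acc u = true) : Computable (AFun q hex) := by
  have hext : Computable fun acc : List ℕ =>
      Denumerable.ofNat (List ℕ) ((stepFun q hex acc).unpair.2) :=
    (Computable.ofNat (List ℕ)).comp ((Primrec.snd.comp Primrec.unpair).to_comp.comp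
      (stepFun_computable hq hex))
  have hh : Computable₂ fun (_ : ℕ) (p : ℕ × List ℕ) =>
      p.2 ++ Denumerable.ofNat (List ℕ) ((stepFun q hex p.2).unpair.2) :=
    Computable.list_append.comp (Computable.snd.comp Computable.snd)
      (hext.comp (Computable.snd.comp Computable.snd))
  exact (Computable.nat_rec Computable.id (Computable.const []) hh).of_eq fun k => rfl

/-- The reduction function. -/
noncomputable def fFun (q : List ℕ → ℕ → Bool) (hex : ∀ acc, ∃ u, q acc u = true) (k : ℕ) : ℕ :=
  (Denumerable.ofNat (List ℕ) ((stepFun q hex (AFun q hex k)).unpair.2)).headD 0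

theorem fFun_computable {q : List ℕ → ℕ → Bool} (hq : Primrec₂ q)
    (hex : ∀ acc, ∃ u, q acc u = true) : Computable (fFun q hex) := by
  have h1 : Computable fun k : ℕ =>
      Denumerable.ofNat (List ℕ) ((stepFun q hex (AFun q hex k)).unpair.2) :=
    (Computable.ofNat (List ℕ)).comp ((Primrec.snd.comp Primrec.unpair).to_comp.comp
      ((stepFun_computable hq hex).comp (AFun_computable hq hex)))
  have h2 : Primrec fun l : List ℕ => l.headD 0 :=
    (Primrec.option_getD.comp Primrec.list_head? (Primrec.const 0)).of_eq
      fun l => (headD_eq l).symm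
  exact h2.to_comp.comp h1

end Stmt15Aux


theorem Stmt15Aux.natPartrec_recursiveIn {g : ℕ →. ℕ} (h : Nat.Partrec g) (O : ℕ → ℕ) :
    RecursiveIn' O g := by
  induction h with
  | zero => exact .zero
  | succ => exact .succ
  | left => exact .left
  | right => exact .right
  | pair _ _ ih₁ ih₂ => exact .pair ih₁ ih₂
  | comp _ _ ih₁ ih₂ => exact .comp ih₁ ih₂
  | prec _ _ ih₁ ih₂ => exact .prec ih₁ ih₂
  | rfind _ ih => exact .rfind ih

theorem Stmt15Aux.cePred_range {f : ℕ → ℕ} (hf : Computable f) : CePred (Set.range f) := by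
  have hp : Partrec₂ fun (x y : ℕ) => (Part.some (decide (f y = x)) : Part Bool) := by
    have hcomp : Computable fun p : ℕ × ℕ => decide (f p.2 = p.1) :=
      Primrec.eq.decide.to_comp.comp (hf.comp Computable.snd) Computable.fst
    exact hcomp.to₂.partrec₂
  have h1 : Partrec fun x : ℕ =>
      (Nat.rfind fun y => (Part.some (decide (f y = x)) : Part Bool)).map fun _ => () :=
    (Partrec.rfind hp).map ((Computable.const ()).comp Computable.fst).to₂
  refine h1.of_eq fun x => Part.ext' ?_ fun _ _ => rfl
  rw [Part.map_Dom]
  refine Nat.rfind_dom.trans ?_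
  constructor
  · rintro ⟨y, hy, -⟩
    rw [Part.mem_some_iff] at hy
    exact ⟨⟨y, of_decide_eq_true hy.symm⟩, trivial⟩
  · rintro ⟨⟨y, hy⟩, -⟩
    exact ⟨y, (by simp [Part.mem_some_iff, hy]), fun _ => trivial⟩

theorem Stmt15Aux.core (R : ℕ → ℕ → Prop) (hR : Ceer R) (n : ℕ)
    (hbnd : ∀ x, {y | R x y}.Finite ∧ {y | R x y}.ncard ≤ n) :
    ∃ f : ℕ → ℕ, Computable f ∧ ∀ x y, x = y ↔ R (f x) (f y) := by
  classical
  obtain ⟨hEq, hRe⟩ := hR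
  -- a code enumerating the relation
  have h1 : Partrec fun nn : ℕ =>
      (Part.assert (R nn.unpair.1 nn.unpair.2) fun _ => Part.some ()).map fun _ => 0 := by
    have h0 : Computable fun nn : ℕ => (nn.unpair.1, nn.unpair.2) :=
      Primrec.unpair.to_comp.of_eq fun nn => rfl
    exact (hRe.comp h0).map ((Computable.const 0).comp Computable.fst).to₂
  obtain ⟨c, hc⟩ := Nat.Partrec.Code.exists_code.1 (Partrec.nat_iff.1 h1)
  have hVR : ∀ x y, R x y ↔ ∃ t, Stmt15Aux.Vfun c t x y = true := by
    intro x y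
    have hd : R x y ↔ (Nat.Partrec.Code.eval c (Nat.pair x y)).Dom := by
      rw [hc]
      simp [Part.assert, Nat.unpair_pair]
    rw [hd, Part.dom_iff_mem]
    constructor
    · rintro ⟨a, ha⟩
      obtain ⟨t, ht⟩ := Nat.Partrec.Code.evaln_complete.1 ha
      exact ⟨t, Option.isSome_iff_exists.2 ⟨a, ht⟩⟩
    · rintro ⟨t, ht⟩
      obtain ⟨a, ha⟩ := Option.isSome_iff_exists.1 ht
      exact ⟨a, Nat.Partrec.Code.evaln_complete.2 ⟨t, ha⟩⟩
  -- equivalence classes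
  set C : ℕ → Set ℕ := fun x => {y | R x y} with hCdef
  have hCfin : ∀ x, (C x).Finite := fun x => (hbnd x).1
  have hCself : ∀ x, x ∈ C x := fun x => hEq.refl x
  have hCeq : ∀ {x y}, R x y → C x = C y := by
    intro x y h
    ext z
    exact ⟨fun hz => hEq.trans (hEq.symm h) hz, fun hz => hEq.trans h hz⟩
  set T : ℕ → Set ℕ := fun k => {x | k ≤ (C x).ncard} with hTdef
  have hT1 : (T 1).Infinite :=
    Set.infinite_univ.mono fun x _ => (Set.ncard_pos (hCfin x)).2 ⟨x, hCself x⟩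
  have hn1 : 1 ≤ n := le_trans ((Set.ncard_pos (hCfin 0)).2 ⟨0, hCself 0⟩) (hbnd 0).2
  set m : ℕ := Nat.findGreatest (fun k => (T k).Infinite) n with hmdef
  have hTm : (T m).Infinite := by
    rw [hmdef]
    exact Nat.findGreatest_spec (P := fun k => (T k).Infinite) hn1 hT1
  have hm1 : 1 ≤ m := by
    rw [hmdef]
    exact Nat.le_findGreatest (P := fun k => (T k).Infinite) hn1 hT1
  have hTm1 : (T (m + 1)).Finite := by
    by_cases h : m + 1 ≤ n
    · by_contra hinf'
      exact Nat.findGreatest_is_greatest (P := fun k => (T k).Infinite)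
        (Nat.lt_succ_self _) h hinf'
    · have he : T (m + 1) = ∅ := by
        apply Set.eq_empty_iff_forall_notMem.2
        intro x hx
        have h2 : (C x).ncard ≤ n := (hbnd x).2
        have h3 : m + 1 ≤ (C x).ncard := hx
        omega
      rw [he]; exact Set.finite_empty
  have hFsub : ∀ {x}, x ∉ T (m + 1) → (C x).ncard ≤ m := by
    intro x hx
    have h3 : ¬(m + 1 ≤ (C x).ncard) := hx
    omega
  have hFclosed : ∀ {x y}, R x y → x ∈ T (m + 1) → y ∈ T (m + 1) := by
    intro x y h hx
    show m + 1 ≤ (C y).ncard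
    rw [← hCeq h]
    exact hx
  set Lf : List ℕ := hTm1.toFinset.sort (· ≤ ·) with hLfdef
  have hLf : ∀ x, x ∈ Lf ↔ x ∈ T (m + 1) := fun x =>
    (Finset.mem_sort _).trans (Set.Finite.mem_toFinset _)
  -- the validity predicate and its semantics
  set q : List ℕ → ℕ → Bool := Stmt15Aux.Qfun c m Lf with hqdef
  have hQiff : ∀ acc u, q acc u = true ↔
      ((Denumerable.ofNat (List ℕ) u.unpair.2).length = m ∧
        (Denumerable.ofNat (List ℕ) u.unpair.2).Chain'
          (fun a b => Stmt15Aux.VVfun c u.unpair.1 a b = true) ∧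
        (∀ x ∈ Denumerable.ofNat (List ℕ) u.unpair.2, x ∉ T (m + 1)) ∧
        (Denumerable.ofNat (List ℕ) u.unpair.2).headD 0 ∉ acc) := by
    intro acc u
    rw [hqdef]
    show (_ && _ && _ && _) = true ↔ _
    simp only [Bool.and_eq_true, decide_eq_true_eq, (Stmt15Aux.chkFold_spec _ _).2,
      Stmt15Aux.allFold_spec, Bool.not_eq_true', decide_eq_false_iff_not, and_assoc]
    constructor
    · rintro ⟨a1, a2, a3, a4⟩
      exact ⟨a1, a2, fun x hx hxT => a3 x hx ((hLf x).2 hxT), a4⟩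
    · rintro ⟨a1, a2, a3, a4⟩
      exact ⟨a1, a2, fun x hx hm => a3 x hx ((hLf x).1 hm), a4⟩
  have hQgood : ∀ acc u, q acc u = true →
      ((Denumerable.ofNat (List ℕ) u.unpair.2).length = m ∧
        (Denumerable.ofNat (List ℕ) u.unpair.2).Chain' (fun a b => a < b ∧ R a b) ∧
        (∀ x ∈ Denumerable.ofNat (List ℕ) u.unpair.2, x ∉ T (m + 1))) ∧
        (Denumerable.ofNat (List ℕ) u.unpair.2).headD 0 ∉ acc := by
    intro acc u h
    obtain ⟨a1, a2, a3, a4⟩ := (hQiff acc u).1 h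
    refine ⟨⟨a1, ?_, a3⟩, a4⟩
    refine List.IsChain.imp ?_ a2
    intro a b hab
    have : (decide (a < b) && Stmt15Aux.Vfun c u.unpair.1 a b) = true := hab
    simp only [Bool.and_eq_true, decide_eq_true_eq] at this
    exact ⟨this.1, (hVR a b).2 ⟨u.unpair.1, this.2⟩⟩
  -- any good list is a full equivalence class
  haveI htrans : IsTrans ℕ (fun a b => a < b ∧ R a b) :=
    ⟨fun a b d h1 h2 => ⟨lt_trans h1.1 h2.1, hEq.trans h1.2 h2.2⟩⟩
  have hfull : ∀ l : List ℕ, l.length = m → l.Chain' (fun a b => a < b ∧ R a b) →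
      (∀ x ∈ l, x ∉ T (m + 1)) → ∀ x ∈ l, C x = {y | y ∈ l} := by
    intro l hlen hch hF x hx
    have hpw : l.Pairwise fun a b => a < b ∧ R a b := List.isChain_iff_pairwise.1 hch
    have hnd : l.Nodup := hpw.imp fun h => ne_of_lt h.1
    have hrel : ∀ a ∈ l, ∀ b ∈ l, R a b := by
      have hpw2 : l.Pairwise R := hpw.imp fun h => h.2
      intro a ha b hb
      rcases eq_or_ne a b with rfl | hne
      · exact hEq.refl a
      · haveI : Std.Symm R := ⟨fun _ _ h => hEq.symm h⟩
        exact hpw2.forall ha hb hne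
    have hsub : {y | y ∈ l} ⊆ C x := fun y hy => hrel x hx y hy
    have hcle : (C x).ncard ≤ m := hFsub (hF x hx)
    have hset : {y : ℕ | y ∈ l} = (l.toFinset : Set ℕ) := by ext y; simp
    have hlcard : {y : ℕ | y ∈ l}.ncard = m := by
      rw [hset, Set.ncard_coe_finset, List.toFinset_card_of_nodup hnd, hlen]
    exact (Set.eq_of_subset_of_ncard_le hsub (by rw [hlcard]; exact hcle) (hCfin x)).symm
  -- the search always succeeds
  have hexQ : ∀ acc : List ℕ, ∃ u, q acc u = true := by
    intro acc
    have hG : (T m \ (T (m + 1) ∪ ⋃ a ∈ {a | a ∈ acc}, C a)).Infinite :=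
      hTm.diff (hTm1.union ((acc.finite_toSet).biUnion fun a _ => hCfin a))
    obtain ⟨x, hx⟩ := hG.nonempty
    have hxTm : m ≤ (C x).ncard := hx.1
    have hxF : x ∉ T (m + 1) := fun h => hx.2 (Or.inl h)
    have hxU : x ∉ ⋃ a ∈ {a | a ∈ acc}, C a := fun h => hx.2 (Or.inr h)
    have hcm : (C x).ncard = m := le_antisymm (hFsub hxF) hxTm
    set l : List ℕ := (hCfin x).toFinset.sort (· ≤ ·) with hldef
    have hmeml : ∀ y, y ∈ l ↔ y ∈ C x := fun y =>
      (Finset.mem_sort _).trans ((hCfin x).mem_toFinset)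
    have hlen : l.length = m := by
      rw [hldef, Finset.length_sort, ← Set.ncard_eq_toFinset_card (C x) (hCfin x), hcm]
    have hchainlt : l.Chain' (· < ·) := (Finset.sortedLT_sort _).isChain
    have hrall : ∀ a ∈ l, ∀ b ∈ l, R a b := fun a ha b hb =>
      hEq.trans (hEq.symm ((hmeml a).1 ha)) ((hmeml b).1 hb)
    obtain ⟨t, ht⟩ := Stmt15Aux.uniform_stage
      (V := fun t p => Stmt15Aux.Vfun c t p.1 p.2)
      (fun {t t' p} h hv => Stmt15Aux.Vfun_mono c h hv)
      (l.toFinset ×ˢ l.toFinset)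
      (fun p hp => by
        rw [Finset.mem_product] at hp
        exact (hVR p.1 p.2).1
          (hrall p.1 (List.mem_toFinset.1 hp.1) p.2 (List.mem_toFinset.1 hp.2)))
    have hchain : l.Chain' fun a b => Stmt15Aux.VVfun c t a b = true := by
      refine Stmt15Aux.chain'_mono_mem hchainlt ?_
      intro a ha b hb hab
      show (decide (a < b) && Stmt15Aux.Vfun c t a b) = true
      simp only [Bool.and_eq_true, decide_eq_true_eq]
      exact ⟨hab,
        ht (a, b) (Finset.mem_product.2 ⟨List.mem_toFinset.2 ha, List.mem_toFinset.2 hb⟩)⟩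
    have hnotF : ∀ y ∈ l, y ∉ T (m + 1) := fun y hy hyF =>
      hxF (hFclosed (hEq.symm ((hmeml y).1 hy)) hyF)
    have hnotacc : ∀ y ∈ l, y ∉ acc := fun y hy hyacc =>
      hxU (Set.mem_biUnion hyacc (hEq.symm ((hmeml y).1 hy)))
    have hlne : l ≠ [] := by
      intro h
      rw [h] at hlen
      simp at hlen
      omega
    refine ⟨Nat.pair t (Encodable.encode l), ?_⟩
    have hiff := hQiff acc (Nat.pair t (Encodable.encode l))
    simp only [Nat.unpair_pair, Denumerable.ofNat_encode] at hiff
    exact hiff.2 ⟨hlen, hchain, hnotF, hnotacc _ (Stmt15Aux.headD_mem hlne)⟩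
  -- the reduction function
  refine ⟨Stmt15Aux.fFun q hexQ, Stmt15Aux.fFun_computable (hqdef ▸ Stmt15Aux.Qfun_primrec c m Lf) hexQ, ?_⟩
  set A : ℕ → List ℕ := Stmt15Aux.AFun q hexQ with hAdef
  set f : ℕ → ℕ := Stmt15Aux.fFun q hexQ with hfdef
  have hblock : ∀ k, ∃ l : List ℕ,
      A (k + 1) = A k ++ l ∧ f k ∈ l ∧ (∀ x ∈ l, C x = {y | y ∈ l}) ∧ f k ∉ A k := by
    intro k
    have hq := Stmt15Aux.stepFun_spec q hexQ (A k)
    obtain ⟨⟨a1, a2, a3⟩, a4⟩ := hQgood (A k) (Stmt15Aux.stepFun q hexQ (A k)) hq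
    refine ⟨Denumerable.ofNat (List ℕ) ((Stmt15Aux.stepFun q hexQ (A k)).unpair.2),
      Stmt15Aux.AFun_succ q hexQ k, ?_, hfull _ a1 a2 a3, a4⟩
    apply Stmt15Aux.headD_mem
    intro h
    rw [h] at a1
    simp at a1
    omega
  have hmonoA : ∀ {j k : ℕ}, j ≤ k → ∀ x ∈ A j, x ∈ A k := by
    intro j k hjk
    induction hjk with
    | refl => exact fun x hx => hx
    | step _ ih =>
      intro x hx
      obtain ⟨l, hl, -, -, -⟩ := hblock _
      rw [hl]
      exact List.mem_append_left _ (ih x hx)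
  have hclosed : ∀ k, ∀ x ∈ A k, C x ⊆ {y | y ∈ A k} := by
    intro k
    induction k with
    | zero => intro x hx; exact absurd hx List.not_mem_nil
    | succ k ih =>
      obtain ⟨l, hl, -, hfl, -⟩ := hblock k
      rw [hl]
      intro x hx
      rcases List.mem_append.1 hx with hx' | hx'
      · exact fun y hy => List.mem_append_left _ (ih x hx' hy)
      · rw [hfl x hx']
        exact fun y hy => List.mem_append_right _ hy
  have hkey : ∀ x y, x < y → ¬R (f x) (f y) := by
    intro x y hxy hRxy
    obtain ⟨l, hl, hfl, -, -⟩ := hblock x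
    have h1 : f x ∈ A (x + 1) := by
      rw [hl]
      exact List.mem_append_right _ hfl
    have h2 : f x ∈ A y := hmonoA hxy (f x) h1
    have h3 : f y ∈ A y := hclosed y (f x) h2 hRxy
    obtain ⟨l', -, -, -, hnot⟩ := hblock y
    exact hnot h3
  intro x y
  constructor
  · rintro rfl
    exact hEq.refl (f x)
  · intro h
    rcases lt_trichotomy x y with hlt | heq | hgt
    · exact absurd h (hkey x y hlt)
    · exact heq
    · exact absurd (hEq.symm h) (hkey y x hgt)

/-- A bounded ceer with infinitely many classes admits a computable
reduction from `Id`; equivalently it has an infinite c.e. partial transversal,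
and `0 ∈ Spec⇒(Id, R)`. -/
theorem stmt_15 (R : ℕ → ℕ → Prop) (hR : Ceer R) (hinf : Infinite (Quot R))
    (n : ℕ) (hbnd : ∀ x, {y | R x y}.Finite ∧ {y | R x y}.ncard ≤ n) :
    (∃ f : ℕ → ℕ, Computable f ∧ ∀ x y, x = y ↔ R (f x) (f y)) ∧
      (∃ A : Set ℕ, A.Infinite ∧ PartialTransversal R A ∧ CePred A) ∧
      TuringDegree'.zero ∈ SpecRed (fun x y => x = y) R := by
  obtain ⟨f, hfc, hf⟩ := Stmt15Aux.core R hR n hbnd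
  have hinj : Function.Injective f := fun a b hab => (hf a b).2 (hab ▸ hR.1.refl (f a))
  refine ⟨⟨f, hfc, hf⟩, ⟨Set.range f, Set.infinite_range_of_injective hinj, ?_, Stmt15Aux.cePred_range hfc⟩, ?_⟩
  · rintro x ⟨a, rfl⟩ y ⟨b, rfl⟩ hne hRxy
    exact hne (congrArg f ((hf a b).2 hRxy))
  · refine ⟨f, ?_, hf⟩
    show RecursiveIn' (fun _ => 0) ↑f
    exact Stmt15Aux.natPartrec_recursiveIn (Partrec.nat_iff.1 hfc) _
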